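/- Set σ₁ = σ, σ₂ = ε(σ), σ₃ = ε²(σ), with σ and ε as above. There do not exist linear forms l₁, l₂, l₃ : ℚ³ → ℚ such that for all i ≠ j in {1,2,3} and every nonzero x ∈ σᵢ one has lᵢ(x) > lⱼ(x). -/

import Mathlib

open Pointwise

/-- The cone generated by a finite family of vectors: all nonnegative
rational linear combinations of the `g i`. -/
def coneGen {V : Type*} [AddCommGroup V] [Module ℚ V] {n : ℕ} (g : Fin n → V) : Set V :=
  {x | ∃ c : Fin n → ℚ, (∀ i, 0 ≤ c i) ∧ x = ∑ i, c i • g i}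

/-- A set is a cone if it is the cone generated by some finite family of vectors. -/
def IsCone {V : Type*} [AddCommGroup V] [Module ℚ V] (C : Set V) : Prop :=
  ∃ (n : ℕ) (g : Fin n → V), C = coneGen g

/-- `F` is a face of the cone `C` if `F = C ∩ l⁻¹(0)` for some linear form `l`
nonnegative on `C`. -/
def IsFaceOf {V : Type*} [AddCommGroup V] [Module ℚ V] (F C : Set V) : Prop :=
  ∃ l : V →ₗ[ℚ] ℚ, (∀ x ∈ C, 0 ≤ l x) ∧ F = C ∩ {x | l x = 0}

/-- A fan: a finite collection of strictly convex cones, closed under taking faces,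
such that the intersection of any two of its cones is a face of each. -/
def IsFan {V : Type*} [AddCommGroup V] [Module ℚ V] (S : Set (Set V)) : Prop :=
  S.Finite ∧
  (∀ C ∈ S, IsCone C ∧ C ∩ (-C) = ({0} : Set V)) ∧
  (∀ C ∈ S, ∀ F : Set V, IsFaceOf F C → F ∈ S) ∧
  (∀ C ∈ S, ∀ C' ∈ S, IsFaceOf (C ∩ C') C ∧ IsFaceOf (C ∩ C') C')

/-- A cone of the collection `S` is maximal if it is not strictly contained in
another cone of `S`. -/
def IsMaximalIn {V : Type*} [AddCommGroup V] [Module ℚ V] (S : Set (Set V)) (C : Set V) : Prop :=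
  C ∈ S ∧ ∀ C' ∈ S, C ⊆ C' → C' = C

/-- A fan is quasi-projective if there is a family of linear forms indexed by its
maximal cones which agree on pairwise intersections and satisfy the strict
inequality condition. -/
def IsQuasiProjectiveFan {V : Type*} [AddCommGroup V] [Module ℚ V] (S : Set (Set V)) : Prop :=
  ∃ l : Set V → (V →ₗ[ℚ] ℚ),
    (∀ C, IsMaximalIn S C → ∀ C', IsMaximalIn S C' → ∀ x ∈ C ∩ C', l C x = l C' x) ∧
    (∀ C, IsMaximalIn S C → ∀ C', IsMaximalIn S C' → C ≠ C' →
      ∀ x ∈ C, x ∉ C' → l C' x < l C x)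

/-- The generators `5u+v−5w`, `−5u−5v+14w`, `4u−v` of the cone `σ`. -/
def genS : Fin 3 → (Fin 3 → ℚ) := ![![5, 1, -5], ![-5, -5, 14], ![4, -1, 0]]

/-- The cone `σ = Cone(5u+v−5w, −5u−5v+14w, 4u−v)` in `ℚ³`. -/
def coneSigma : Set (Fin 3 → ℚ) := coneGen genS

/-- The matrix of `ε` in the standard basis `(u, v, w)`:
`ε(u) = v`, `ε(v) = −u−v`, `ε(w) = w`. -/
def epsMat : Matrix (Fin 3) (Fin 3) ℚ := ![![0, -1, 0], ![1, -1, 0], ![0, 0, 1]]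

/-- The linear automorphism `ε : ℚ³ → ℚ³`. -/
def eps : (Fin 3 → ℚ) →ₗ[ℚ] (Fin 3 → ℚ) := Matrix.toLin' epsMat

/-- The three cones `σ₁ = σ`, `σ₂ = ε(σ)`, `σ₃ = ε²(σ)`. -/
def threeCones : Fin 3 → Set (Fin 3 → ℚ) :=
  ![coneSigma, ⇑eps '' coneSigma, ⇑eps '' (⇑eps '' coneSigma)]

/-- There are no linear forms `l₁, l₂, l₃ : ℚ³ → ℚ` such that
for all `i ≠ j` and every nonzero `x ∈ σᵢ` one has `lᵢ(x) > lⱼ(x)`. -/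
lemma eval_pt (phi : (Fin 3 → ℚ) →ₗ[ℚ] ℚ) (p : Fin 3 → ℚ) :
    phi p = p 0 * phi ![1,0,0] + p 1 * phi ![0,1,0] + p 2 * phi ![0,0,1] := by
  have hp : p = p 0 • ![1,0,0] + p 1 • ![0,1,0] + p 2 • ![0,0,1] := by
    funext i; fin_cases i <;> simp
  conv_lhs => rw [hp]
  simp only [map_add, map_smul, smul_eq_mul]

lemma eps_apply (p : Fin 3 → ℚ) : eps p = ![-p 1, p 0 - p 1, p 2] := by
  funext i
  fin_cases i <;>
    simp [show eps p = Matrix.mulVec epsMat p from Matrix.toLin'_apply epsMat p, epsMat, Matrix.mulVec, dotProduct,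
      Fin.sum_univ_three] <;> ring

lemma mem_sigma0 : (![5,1,-5] : Fin 3 → ℚ) ∈ coneSigma := by
  refine ⟨![1,0,0], ?_, ?_⟩
  · intro i; fin_cases i <;> norm_num
  · simp [genS, Fin.sum_univ_three]

lemma mem_sigma1 : (![-5,-5,14] : Fin 3 → ℚ) ∈ coneSigma := by
  refine ⟨![0,1,0], ?_, ?_⟩
  · intro i; fin_cases i <;> norm_num
  · simp [genS, Fin.sum_univ_three]

lemma eps_g0 : eps ![5,1,-5] = ![-1,4,-5] := by
  rw [eps_apply]; funext i; fin_cases i <;> norm_num [Matrix.cons_val_two, Matrix.vecHead, Matrix.vecTail]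

lemma eps_g1 : eps ![-5,-5,14] = ![5,0,14] := by
  rw [eps_apply]; funext i; fin_cases i <;> norm_num [Matrix.cons_val_two, Matrix.vecHead, Matrix.vecTail]

lemma eps_q0 : eps ![-1,4,-5] = ![-4,-5,-5] := by
  rw [eps_apply]; funext i; fin_cases i <;> norm_num [Matrix.cons_val_two, Matrix.vecHead, Matrix.vecTail]

lemma eps_q1 : eps ![5,0,14] = ![0,5,14] := by
  rw [eps_apply]; funext i; fin_cases i <;> norm_num [Matrix.cons_val_two, Matrix.vecHead, Matrix.vecTail]

lemma tc0 : threeCones 0 = coneSigma := rfl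
lemma tc1 : threeCones 1 = ⇑eps '' coneSigma := rfl
lemma tc2 : threeCones 2 = ⇑eps '' (⇑eps '' coneSigma) := rfl

theorem no_strict_linear_forms :
    ¬ ∃ l : Fin 3 → ((Fin 3 → ℚ) →ₗ[ℚ] ℚ),
        ∀ i j : Fin 3, i ≠ j → ∀ x ∈ threeCones i, x ≠ 0 → l j x < l i x := by
  rintro ⟨l, h⟩
  have hm_p0 : (![5,1,-5] : Fin 3 → ℚ) ∈ threeCones 0 := by rw [tc0]; exact mem_sigma0
  have hm_p1 : (![-5,-5,14] : Fin 3 → ℚ) ∈ threeCones 0 := by rw [tc0]; exact mem_sigma1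
  have hm_q0 : (![-1,4,-5] : Fin 3 → ℚ) ∈ threeCones 1 := by
    rw [tc1]; exact ⟨_, mem_sigma0, eps_g0⟩
  have hm_q1 : (![5,0,14] : Fin 3 → ℚ) ∈ threeCones 1 := by
    rw [tc1]; exact ⟨_, mem_sigma1, eps_g1⟩
  have hm_r0 : (![-4,-5,-5] : Fin 3 → ℚ) ∈ threeCones 2 := by
    rw [tc2]; exact ⟨_, ⟨_, mem_sigma0, eps_g0⟩, eps_q0⟩
  have hm_r1 : (![0,5,14] : Fin 3 → ℚ) ∈ threeCones 2 := by
    rw [tc2]; exact ⟨_, ⟨_, mem_sigma1, eps_g1⟩, eps_q1⟩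
  have key : ∀ (i j : Fin 3) (p : Fin 3 → ℚ), i ≠ j → p ∈ threeCones i → p ≠ 0 →
      p 0 * l j ![1,0,0] + p 1 * l j ![0,1,0] + p 2 * l j ![0,0,1]
      < p 0 * l i ![1,0,0] + p 1 * l i ![0,1,0] + p 2 * l i ![0,0,1] := by
    intro i j p hij hp hp0
    have := h i j hij p hp hp0
    rwa [eval_pt (l i), eval_pt (l j)] at this
  have hz : ∀ (a b c : ℚ), a ≠ 0 → (![a,b,c] : Fin 3 → ℚ) ≠ 0 := by
    intro a b c ha hz
    exact ha (by simpa using congrFun hz 0)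
  have hz' : ∀ (a b c : ℚ), b ≠ 0 → (![a,b,c] : Fin 3 → ℚ) ≠ 0 := by
    intro a b c hb hz
    exact hb (by simpa using congrFun hz 1)
  have H1 := key 0 1 ![5,1,-5] (by decide) hm_p0 (hz _ _ _ (by norm_num))
  have H2 := key 0 2 ![-5,-5,14] (by decide) hm_p1 (hz _ _ _ (by norm_num))
  have H3 := key 1 2 ![-1,4,-5] (by decide) hm_q0 (hz _ _ _ (by norm_num))
  have H4 := key 1 0 ![5,0,14] (by decide) hm_q1 (hz _ _ _ (by norm_num))
  have H5 := key 2 0 ![-4,-5,-5] (by decide) hm_r0 (hz _ _ _ (by norm_num))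
  have H6 := key 2 0 ![0,5,14] (by decide) hm_r1 (hz' _ _ _ (by norm_num))
  have H7 := key 2 1 ![0,5,14] (by decide) hm_r1 (hz' _ _ _ (by norm_num))
  norm_num [Matrix.cons_val_two, Matrix.vecHead, Matrix.vecTail] at H1 H2 H3 H4 H5 H6 H7
  linarith [H1, H2, H3, H4, H5, H6, H7]
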